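/- Kaloujnine–Krasner embedding theorem: Let G and H be groups and let 1 → H → E →τ→ G → 1 be an extension of H by G (i.e. H is a normal subgroup of E and τ : E → G is a surjective group homomorphism with kernel H). Then there exists an injective group homomorphism ι : E → H ≀≀ G into the unrestricted regular wreath product such that π ∘ ι = τ, where π : H ≀≀ G → G is the canonical projection, and such that for every h ∈ H the function component of ι(h) takes the value h at 1 ∈ G (in particular ι maps H into ker π). -/

import Mathlib

/-- Multiplication in the unrestricted regular wreath product `H ≀≀ G = (G → H) ⋊ G`,
where `G` acts on functions `G → H` by `(ᵍf)(x) = f(xg)`: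
`(f, g)·(f', g') = (f · ᵍf', g·g')`. -/
def wreathMul {H G : Type*} [Group H] [Group G] (a b : (G → H) × G) : (G → H) × G :=
  (fun x => a.1 x * b.1 (x * a.2), a.2 * b.2)

/-- **Kaloujnine–Krasner embedding theorem**: given an extension
`1 → H → E →τ→ G → 1` (with `H = ker τ`), there is an injective homomorphism
`ι : E → H ≀≀ G` into the unrestricted regular wreath product such that `π ∘ ι = τ`
and such that for every `h ∈ H` the function component of `ι h` takes the value `h`
at `1 ∈ G`. -/
theorem kaloujnine_krasner {E G : Type*} [Group E] [Group G]
    (τ : E →* G) (hτ : Function.Surjective τ) :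
    ∃ ι : E → (G → ↥τ.ker) × G,
      Function.Injective ι ∧
      (∀ e₁ e₂ : E, ι (e₁ * e₂) = wreathMul (ι e₁) (ι e₂)) ∧
      (∀ e : E, (ι e).2 = τ e) ∧
      (∀ h : ↥τ.ker, (((ι h).1 1 : ↥τ.ker) : E) = (h : E)) := by
  classical
  -- choose a set-theoretic section s₀ of τ
  choose s₀ hs₀ using hτ
  -- normalize so that s 1 = 1
  set s : G → E := fun g => s₀ g * (s₀ 1)⁻¹ with hs_def
  have hs : ∀ g, τ (s g) = g := by
    intro g
    simp [hs_def, hs₀]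
  have hs1 : s 1 = 1 := by simp [hs_def]
  -- the function component lands in ker τ
  have hker : ∀ (e : E) (x : G), s x * e * (s (x * τ e))⁻¹ ∈ τ.ker := by
    intro e x
    rw [MonoidHom.mem_ker, map_mul, map_mul, map_inv, hs, hs]; group
  refine ⟨fun e => (fun x => ⟨s x * e * (s (x * τ e))⁻¹, hker e x⟩, τ e), ?_, ?_, ?_, ?_⟩
  · intro e₁ e₂ h
    have h2 : τ e₁ = τ e₂ := congrArg Prod.snd h
    have h1 := congrArg (fun p => ((p.1 1 : ↥τ.ker) : E)) h
    simp only at h1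
    rw [hs1] at h1
    simp only [one_mul] at h1
    rw [h2] at h1
    exact mul_right_cancel h1
  · intro e₁ e₂
    unfold wreathMul
    refine Prod.ext ?_ (by simp)
    funext x
    ext
    simp only [map_mul, Subgroup.coe_mul]
    group
  · intro e; rfl
  · intro h
    have : τ (h : E) = 1 := h.2
    simp [hs1, this]
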